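/- Let A ∈ ℂ^{2×2} be diagonalizable with distinct eigenvalues, eigenvector angle θ, and y = |λ₂−λ₁|. Then as ε → 0, r_max/r_min = 1 + (2 cos θ cot θ)·ε/y + O(ε²), where r_max and r_min are the maximum and minimum distances from λ₁ to the boundary of the component of σ_ε(A) containing λ₁. In particular, if A is not normal the ratio exceeds 1 for all sufficiently small ε > 0. -/

import Mathlib

open Asymptotics

set_option maxHeartbeats 1000000 in
lemma rmax_key_est (y s β c K : ℝ) (hy : 0 < y) (hs1 : 1 ≤ s)
    (hβ0 : 0 ≤ β) (hc0 : 0 ≤ c) (hK0 : 0 ≤ K)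
    (hβy : β * y = 2 * (s ^ 2 - 1)) (hcs : c * s = β) (hKy : K * y = 4 * s * β + β ^ 2)
    (ε : ℝ) (hε : 0 < ε) (hε1 : ε ≤ 1) (h8 : 8 * s * ε ≤ y) (hβε : β * ε ≤ y / 4)
    (hd : β * ε + K * ε ^ 2 ≤ s) :
    |((y - Real.sqrt (y ^ 2 + 4 * ε ^ 2 - 4 * y * ε * s)) / 2) /
        ((Real.sqrt (y ^ 2 + 4 * ε ^ 2 + 4 * y * ε * s) - y) / 2) - (1 + c * ε)|
      ≤ (2 * ((c * β + 2 * K + c * K) / 2) / s) * ε ^ 2 ∧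
    (K * ε < β → 1 < ((y - Real.sqrt (y ^ 2 + 4 * ε ^ 2 - 4 * y * ε * s)) / 2) /
        ((Real.sqrt (y ^ 2 + 4 * ε ^ 2 + 4 * y * ε * s) - y) / 2)) := by
  have hs0 : (0:ℝ) < s := lt_of_lt_of_le one_pos hs1
  set A := Real.sqrt (y ^ 2 + 4 * ε ^ 2 - 4 * y * ε * s) with hAdef
  set B := Real.sqrt (y ^ 2 + 4 * ε ^ 2 + 4 * y * ε * s) with hBdef
  have h8y : 8 * s * ε * y ≤ y * y := mul_le_mul_of_nonneg_right h8 hy.le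
  have hP0 : y ^ 2 / 2 ≤ y ^ 2 + 4 * ε ^ 2 - 4 * y * ε * s := by
    linarith only [h8y, sq_nonneg ε]
  have hQnn : (0:ℝ) ≤ 4 * y * ε * s := by
    have h := mul_nonneg (mul_nonneg hy.le hε.le) hs0.le
    linarith only [h]
  have hQ0 : (0:ℝ) ≤ y ^ 2 + 4 * ε ^ 2 + 4 * y * ε * s := by
    linarith only [sq_nonneg y, sq_nonneg ε, hQnn]
  have hA0 : 0 ≤ A := Real.sqrt_nonneg _
  have hA2 : A ^ 2 = y ^ 2 + 4 * ε ^ 2 - 4 * y * ε * s :=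
    Real.sq_sqrt (by linarith only [hP0, sq_nonneg y])
  have hAy : y / 2 ≤ A := by
    rw [hAdef, Real.le_sqrt (by linarith only [hy]) (by linarith only [hP0, sq_nonneg y])]
    linarith only [hP0, sq_nonneg y]
  have hB0 : 0 ≤ B := Real.sqrt_nonneg _
  have hB2 : B ^ 2 = y ^ 2 + 4 * ε ^ 2 + 4 * y * ε * s := Real.sq_sqrt hQ0
  have hBy : y ≤ B := by
    rw [hBdef, Real.le_sqrt hy.le hQ0]
    linarith only [sq_nonneg ε, hQnn]
  -- small auxiliary facts
  have hβε2 : β * ε ^ 2 ≤ β * ε := by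
    have h := mul_nonneg (mul_nonneg hβ0 hε.le) (sub_nonneg.mpr hε1)
    linarith only [h]
  have hsε0 : 0 ≤ s * ε := mul_nonneg hs0.le hε.le
  have hKy3 : K * y * ε ^ 3 = 4 * s * β * ε ^ 3 + β ^ 2 * ε ^ 3 := by
    linear_combination ε ^ 3 * hKy
  have e1 : 0 ≤ s * β * ε ^ 3 :=
    mul_nonneg (mul_nonneg hs0.le hβ0) (pow_nonneg hε.le 3)
  have e2 : 0 ≤ β ^ 2 * ε ^ 3 * (1 - ε) :=
    mul_nonneg (mul_nonneg (sq_nonneg β) (pow_nonneg hε.le 3)) (by linarith only [hε1])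
  have e3 : 0 ≤ β ^ 2 * ε ^ 4 := mul_nonneg (sq_nonneg β) (pow_nonneg hε.le 4)
  have hK3 : 0 ≤ K * ε ^ 3 := mul_nonneg hK0 (pow_nonneg hε.le 3)
  -- approximations t := y - 2sε - βε², u := y + 2sε - βε²
  have ht_lb : y / 2 ≤ y - 2 * s * ε - β * ε ^ 2 := by linarith only [h8, hβε2, hβε]
  have hu_lb : y / 2 ≤ y + 2 * s * ε - β * ε ^ 2 := by linarith only [hβε2, hβε, hsε0, hy]
  have hN_ub : 4 * s * β * ε ^ 3 + β ^ 2 * ε ^ 4 ≤ K * y * ε ^ 3 := by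
    linarith only [hKy3, e2, e1]
  have hN0 : 0 ≤ 4 * s * β * ε ^ 3 + β ^ 2 * ε ^ 4 := by linarith only [e1, e3]
  -- A ≤ t and t - A ≤ K ε³
  have hPt : (y ^ 2 + 4 * ε ^ 2 - 4 * y * ε * s) - (y - 2 * s * ε - β * ε ^ 2) ^ 2
      = -(4 * s * β * ε ^ 3 + β ^ 2 * ε ^ 4) := by linear_combination (2 * ε ^ 2) * hβy
  have heA1 : A ≤ y - 2 * s * ε - β * ε ^ 2 := by
    rw [hAdef]
    calc Real.sqrt (y ^ 2 + 4 * ε ^ 2 - 4 * y * ε * s)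
        ≤ Real.sqrt ((y - 2 * s * ε - β * ε ^ 2) ^ 2) :=
          Real.sqrt_le_sqrt (by linarith only [hPt, hN0])
      _ = y - 2 * s * ε - β * ε ^ 2 := Real.sqrt_sq (by linarith only [ht_lb, hy])
  have hprodA : (y - 2 * s * ε - β * ε ^ 2 - A) * (y - 2 * s * ε - β * ε ^ 2 + A)
      = 4 * s * β * ε ^ 3 + β ^ 2 * ε ^ 4 := by linear_combination -hA2 - hPt
  have heA0 : 0 ≤ y - 2 * s * ε - β * ε ^ 2 - A := by linarith only [heA1]
  have heA2 : y - 2 * s * ε - β * ε ^ 2 - A ≤ K * ε ^ 3 := by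
    have h1 : (y - 2 * s * ε - β * ε ^ 2 - A) * y
        ≤ (y - 2 * s * ε - β * ε ^ 2 - A) * (y - 2 * s * ε - β * ε ^ 2 + A) :=
      mul_le_mul_of_nonneg_left (by linarith only [ht_lb, hAy]) heA0
    rw [hprodA] at h1
    have h2 : (y - 2 * s * ε - β * ε ^ 2 - A) * y ≤ (K * ε ^ 3) * y := by
      linarith only [h1, hN_ub]
    exact le_of_mul_le_mul_right h2 hy
  -- |B - u| ≤ K ε³
  have hQu : (y ^ 2 + 4 * ε ^ 2 + 4 * y * ε * s) - (y + 2 * s * ε - β * ε ^ 2) ^ 2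
      = 4 * s * β * ε ^ 3 - β ^ 2 * ε ^ 4 := by linear_combination (2 * ε ^ 2) * hβy
  have hprodB : (B - (y + 2 * s * ε - β * ε ^ 2)) * (B + (y + 2 * s * ε - β * ε ^ 2))
      = 4 * s * β * ε ^ 3 - β ^ 2 * ε ^ 4 := by linear_combination hB2 + hQu
  have heB1 : B - (y + 2 * s * ε - β * ε ^ 2) ≤ K * ε ^ 3 := by
    rcases le_or_gt B (y + 2 * s * ε - β * ε ^ 2) with h | h
    · linarith only [h, hK3]
    · have h1 : (B - (y + 2 * s * ε - β * ε ^ 2)) * y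
          ≤ (B - (y + 2 * s * ε - β * ε ^ 2)) * (B + (y + 2 * s * ε - β * ε ^ 2)) :=
        mul_le_mul_of_nonneg_left (by linarith only [hBy, hu_lb, hy]) (by linarith only [h])
      rw [hprodB] at h1
      have h2 : (B - (y + 2 * s * ε - β * ε ^ 2)) * y ≤ (K * ε ^ 3) * y := by
        linarith only [h1, hKy3, e2, e3]
      exact le_of_mul_le_mul_right h2 hy
  have heB2 : (y + 2 * s * ε - β * ε ^ 2) - B ≤ K * ε ^ 3 := by
    rcases le_or_gt (y + 2 * s * ε - β * ε ^ 2) B with h | h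
    · linarith only [h, hK3]
    · have h1 : ((y + 2 * s * ε - β * ε ^ 2) - B) * y
          ≤ ((y + 2 * s * ε - β * ε ^ 2) - B) * (B + (y + 2 * s * ε - β * ε ^ 2)) :=
        mul_le_mul_of_nonneg_left (by linarith only [hBy, hu_lb, hy]) (by linarith only [h])
      have hprodB' : ((y + 2 * s * ε - β * ε ^ 2) - B) * (B + (y + 2 * s * ε - β * ε ^ 2))
          = β ^ 2 * ε ^ 4 - 4 * s * β * ε ^ 3 := by linear_combination -hprodB
      rw [hprodB'] at h1
      have h2 : ((y + 2 * s * ε - β * ε ^ 2) - B) * y ≤ (K * ε ^ 3) * y := by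
        linarith only [h1, hKy3, e2, e1]
      exact le_of_mul_le_mul_right h2 hy
  -- lower bound on g = (B - y)/2
  have hdε : β * ε ^ 2 + K * ε ^ 3 ≤ s * ε := by
    have h := mul_le_mul_of_nonneg_right hd hε.le
    linarith only [h]
  have hg_lb : s * ε / 2 ≤ (B - y) / 2 := by linarith only [heB2, hdε]
  have hg_pos : 0 < (B - y) / 2 := lt_of_lt_of_le (half_pos (mul_pos hs0 hε)) hg_lb
  constructor
  · -- main estimate
    have hfg : ((y - A) / 2 - (1 + c * ε) * ((B - y) / 2)) / ((B - y) / 2)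
        = ((y - A) / 2) / ((B - y) / 2) - (1 + c * ε) := by
      rw [sub_div, mul_div_assoc, div_self hg_pos.ne', mul_one]
    have hcε : 0 ≤ c * ε := mul_nonneg hc0 hε.le
    have hε43 : ε ^ 4 ≤ ε ^ 3 := pow_le_pow_of_le_one hε.le hε1 (by norm_num)
    have hcK43 : c * K * ε ^ 4 ≤ c * K * ε ^ 3 :=
      mul_le_mul_of_nonneg_left hε43 (mul_nonneg hc0 hK0)
    have hEB_ub : c * ε * (B - (y + 2 * s * ε - β * ε ^ 2)) ≤ c * K * ε ^ 3 := by
      have h := mul_le_mul_of_nonneg_left heB1 hcε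
      linarith only [h, hcK43]
    have hEB_lb : -(c * K * ε ^ 3) ≤ c * ε * (B - (y + 2 * s * ε - β * ε ^ 2)) := by
      have h := mul_le_mul_of_nonneg_left heB2 hcε
      linarith only [h, hcK43]
    have hcβ3 : 0 ≤ c * β * ε ^ 3 := mul_nonneg (mul_nonneg hc0 hβ0) (pow_nonneg hε.le 3)
    have hid : (y - A) / 2 - (1 + c * ε) * ((B - y) / 2)
        = (c * β * ε ^ 3 + ((y - 2 * s * ε - β * ε ^ 2) - A)
            - (B - (y + 2 * s * ε - β * ε ^ 2))
            - c * ε * (B - (y + 2 * s * ε - β * ε ^ 2))) / 2 := by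
      linear_combination (-(ε ^ 2)) * hcs
    have hnum : |(y - A) / 2 - (1 + c * ε) * ((B - y) / 2)|
        ≤ ((c * β + 2 * K + c * K) / 2) * ε ^ 3 := by
      rw [hid, abs_le]
      constructor
      · linarith only [heA0, heB1, hEB_ub, hcβ3, hK3]
      · linarith only [heA2, heB2, hEB_lb]
    rw [← hfg, abs_div, abs_of_pos hg_pos, div_le_iff₀ hg_pos]
    have hC0 : 0 ≤ 2 * ((c * β + 2 * K + c * K) / 2) / s * ε ^ 2 := by
      have h1 : 0 ≤ c * β := mul_nonneg hc0 hβ0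
      have h2 : 0 ≤ c * K := mul_nonneg hc0 hK0
      exact mul_nonneg (div_nonneg (by linarith only [h1, h2, hK0]) hs0.le) (sq_nonneg ε)
    calc |(y - A) / 2 - (1 + c * ε) * ((B - y) / 2)|
        ≤ ((c * β + 2 * K + c * K) / 2) * ε ^ 3 := hnum
      _ = (2 * ((c * β + 2 * K + c * K) / 2) / s) * ε ^ 2 * (s * ε / 2) := by
          field_simp
      _ ≤ (2 * ((c * β + 2 * K + c * K) / 2) / s) * ε ^ 2 * ((B - y) / 2) :=
          mul_le_mul_of_nonneg_left hg_lb hC0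
  · -- strict inequality part
    intro hKε
    rw [lt_div_iff₀ hg_pos, one_mul]
    have h3 : K * ε ^ 3 < β * ε ^ 2 := by
      have h := mul_pos (sub_pos.mpr hKε) (pow_pos hε 2)
      linarith only [h]
    have hβε20 : 0 ≤ β * ε ^ 2 := mul_nonneg hβ0 (sq_nonneg ε)
    linarith only [h3, hβε20, heA1, heB1]

theorem rmax_div_rmin_asymptotics
    (θ y : ℝ) (hθ : θ ∈ Set.Ioc 0 (Real.pi / 2)) (hy : 0 < y) :
    (fun ε : ℝ =>
        ((y - Real.sqrt (y ^ 2 + 4 * ε ^ 2 - 4 * y * ε / Real.sin θ)) / 2) /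
          ((Real.sqrt (y ^ 2 + 4 * ε ^ 2 + 4 * y * ε / Real.sin θ) - y) / 2) -
        (1 + 2 * Real.cos θ * (Real.cos θ / Real.sin θ) * ε / y))
      =O[nhdsWithin 0 (Set.Ioi 0)] (fun ε : ℝ => ε ^ 2) ∧
    (θ ≠ Real.pi / 2 →
      ∀ᶠ ε : ℝ in nhdsWithin 0 (Set.Ioi 0),
        1 < ((y - Real.sqrt (y ^ 2 + 4 * ε ^ 2 - 4 * y * ε / Real.sin θ)) / 2) /
          ((Real.sqrt (y ^ 2 + 4 * ε ^ 2 + 4 * y * ε / Real.sin θ) - y) / 2)) := by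
  obtain ⟨hθ0, hθ2⟩ := hθ
  have hπ : (0:ℝ) < Real.pi := Real.pi_pos
  have hm : 0 < Real.sin θ := Real.sin_pos_of_pos_of_lt_pi hθ0 (by linarith)
  have hm1 : Real.sin θ ≤ 1 := Real.sin_le_one θ
  have hcos2 : Real.cos θ ^ 2 = 1 - Real.sin θ ^ 2 := Real.cos_sq' θ
  set m := Real.sin θ with hmdef
  set s : ℝ := 1 / m with hsdef
  have hs1 : 1 ≤ s := by rw [hsdef, le_div_iff₀ hm]; linarith
  have hs0 : (0:ℝ) < s := lt_of_lt_of_le one_pos hs1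
  have hsq1 : 1 ≤ s ^ 2 := by
    have h := mul_nonneg (sub_nonneg.mpr hs1) (by linarith : (0:ℝ) ≤ s + 1)
    nlinarith [h]
  set β : ℝ := 2 * (s ^ 2 - 1) / y with hβdef
  have hβ0 : 0 ≤ β := div_nonneg (by linarith) hy.le
  have hβy : β * y = 2 * (s ^ 2 - 1) := div_mul_cancel₀ _ hy.ne'
  set c : ℝ := 2 * Real.cos θ ^ 2 / (m * y) with hcdef
  have hc0 : 0 ≤ c := div_nonneg (by positivity) (mul_nonneg hm.le hy.le)
  have hcs : c * s = β := by
    rw [hcdef, hβdef, hsdef, hcos2]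
    field_simp
  set K : ℝ := (4 * s * β + β ^ 2) / y with hKdef
  have hK0 : 0 ≤ K := by
    have h1 : 0 ≤ 4 * s * β := by positivity
    exact div_nonneg (by linarith [sq_nonneg β]) hy.le
  have hKy : K * y = 4 * s * β + β ^ 2 := div_mul_cancel₀ _ hy.ne'
  have harg : ∀ ε : ℝ, 4 * y * ε / m = 4 * y * ε * s := by
    intro ε; rw [hsdef]; ring
  have hTeq : ∀ ε : ℝ, 1 + 2 * Real.cos θ * (Real.cos θ / m) * ε / y = 1 + c * ε := by
    intro ε; rw [hcdef]; field_simp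
  -- choice of δ and the pointwise conditions
  set δ : ℝ := min 1 (min (y / (8 * s)) (min (y / (4 * (β + 1))) (s / (β + K + 1)))) with hδdef
  have hδ0 : 0 < δ := by
    apply lt_min one_pos
    apply lt_min (div_pos hy (by linarith))
    exact lt_min (div_pos hy (by linarith)) (div_pos hs0 (by linarith))
  have conds : ∀ ε ∈ Set.Ioo (0:ℝ) δ,
      ε ≤ 1 ∧ 8 * s * ε ≤ y ∧ β * ε ≤ y / 4 ∧ β * ε + K * ε ^ 2 ≤ s := by
    intro ε hε
    obtain ⟨hε0, hεδ⟩ := hε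
    have hδ1 : δ ≤ 1 := min_le_left _ _
    have hδ2 : δ ≤ y / (8 * s) := le_trans (min_le_right _ _) (min_le_left _ _)
    have hδ3 : δ ≤ y / (4 * (β + 1)) :=
      le_trans (min_le_right _ _) (le_trans (min_le_right _ _) (min_le_left _ _))
    have hδ4 : δ ≤ s / (β + K + 1) :=
      le_trans (min_le_right _ _) (le_trans (min_le_right _ _) (min_le_right _ _))
    have hε1 : ε ≤ 1 := le_of_lt (lt_of_lt_of_le hεδ hδ1)
    have h8 : 8 * s * ε ≤ y := by
      have h := (lt_div_iff₀ (by linarith : (0:ℝ) < 8 * s)).mp (lt_of_lt_of_le hεδ hδ2)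
      linarith only [h]
    have hβε : β * ε ≤ y / 4 := by
      have h := (lt_div_iff₀ (by linarith : (0:ℝ) < 4 * (β + 1))).mp (lt_of_lt_of_le hεδ hδ3)
      linarith only [h, hε0]
    have hd : β * ε + K * ε ^ 2 ≤ s := by
      have h := (lt_div_iff₀ (by linarith : (0:ℝ) < β + K + 1)).mp (lt_of_lt_of_le hεδ hδ4)
      have hK2 : K * ε ^ 2 ≤ K * ε := by
        have h2 := mul_nonneg (mul_nonneg hK0 hε0.le) (sub_nonneg.mpr hε1)
        linarith only [h2]
      linarith only [h, hK2, hε0]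
    exact ⟨hε1, h8, hβε, hd⟩
  constructor
  · rw [isBigO_iff]
    refine ⟨2 * ((c * β + 2 * K + c * K) / 2) / s, ?_⟩
    have hmem : Set.Ioo (0:ℝ) δ ∈ nhdsWithin 0 (Set.Ioi 0) :=
      Ioo_mem_nhdsGT_of_mem ⟨le_refl 0, hδ0⟩
    filter_upwards [hmem] with ε hε
    obtain ⟨hε1, h8, hβε, hd⟩ := conds ε hε
    have key := (rmax_key_est y s β c K hy hs1 hβ0 hc0 hK0 hβy hcs hKy ε hε.1 hε1 h8 hβε hd).1
    simp only [Real.norm_eq_abs]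
    rw [harg ε, hTeq ε, abs_of_nonneg (sq_nonneg ε)]
    exact key
  · intro hne
    have hθlt : θ < Real.pi / 2 := lt_of_le_of_ne hθ2 hne
    have hmlt : m < 1 := by
      rw [hmdef]
      calc Real.sin θ < Real.sin (Real.pi / 2) := by
            apply Real.sin_lt_sin_of_lt_of_le_pi_div_two (by linarith) (le_refl _) hθlt
        _ = 1 := Real.sin_pi_div_two
    have hs1' : 1 < s := by rw [hsdef, lt_div_iff₀ hm]; linarith
    have hβpos : 0 < β := by
      apply div_pos _ hy
      nlinarith [mul_pos (sub_pos.mpr hs1') (by linarith : (0:ℝ) < s + 1)]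
    have hδ'0 : 0 < min δ (β / (K + 1)) :=
      lt_min hδ0 (div_pos hβpos (by linarith))
    have hmem : Set.Ioo (0:ℝ) (min δ (β / (K + 1))) ∈ nhdsWithin 0 (Set.Ioi 0) :=
      Ioo_mem_nhdsGT_of_mem ⟨le_refl 0, hδ'0⟩
    filter_upwards [hmem] with ε hε
    obtain ⟨hε0, hεδ'⟩ := hε
    have hεδ : ε ∈ Set.Ioo (0:ℝ) δ := ⟨hε0, lt_of_lt_of_le hεδ' (min_le_left _ _)⟩
    obtain ⟨hε1, h8, hβε, hd⟩ := conds ε hεδ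
    have hKε : K * ε < β := by
      have h := (lt_div_iff₀ (by linarith : (0:ℝ) < K + 1)).mp
        (lt_of_lt_of_le hεδ' (min_le_right _ _))
      linarith only [h, hε0]
    have key := (rmax_key_est y s β c K hy hs1 hβ0 hc0 hK0 hβy hcs hKy ε hε0 hε1 h8 hβε hd).2 hKε
    rw [harg ε]
    exact key
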